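/- Let λ, μ ∈ ℂ with Re λ ≠ 0 and Re μ ≠ 0, and let t < 0. Then the function s ↦ g_s(λ) g_{t−s}(μ) is integrable on ℝ and ∫_{−∞}^{∞} g_s(λ) g_{t−s}(μ) ds = −exp_t⁻[λ, μ], where exp_t⁻[λ, μ] is defined as follows: 0 if Re λ < 0 and Re μ < 0; −e^{μt}/(λ − μ) if Re λ < 0 and Re μ > 0; e^{λt}/(λ − μ) if Re λ > 0 and Re μ < 0; (e^{λt} − e^{μt})/(λ − μ) if Re λ > 0, Re μ > 0, and λ ≠ μ; t e^{λt} if Re λ > 0 and λ = μ. -/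

import Mathlib

open Complex MeasureTheory

section Aux

open Set Filter

lemma cexpDeriv {a : ℂ} (ha : a ≠ 0) (x : ℝ) :
    HasDerivAt (fun y : ℝ => Complex.exp (a * y) / a) (Complex.exp (a * x)) x := by
  conv => congr
  rw [← mul_div_cancel_right₀ (Complex.exp (a * x)) ha]
  apply ((Complex.hasDerivAt_exp _).comp x _).div_const a
  simpa only [mul_one, id_eq] using ((hasDerivAt_id (x : ℂ)).const_mul a).comp_ofReal

lemma cexp_tendsto_atTop {a : ℂ} (ha : a.re < 0) :
    Tendsto (fun y : ℝ => Complex.exp (a * y)) atTop (nhds 0) := by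
  rw [tendsto_zero_iff_norm_tendsto_zero]
  simp only [Complex.norm_exp, mul_re, ofReal_re, ofReal_im, mul_zero,
    sub_zero]
  exact Real.tendsto_exp_atBot.comp ((tendsto_const_mul_atBot_of_neg ha).mpr tendsto_id)

lemma cexp_tendsto_atBot {a : ℂ} (ha : 0 < a.re) :
    Tendsto (fun y : ℝ => Complex.exp (a * y)) atBot (nhds 0) := by
  rw [tendsto_zero_iff_norm_tendsto_zero]
  simp only [Complex.norm_exp, mul_re, ofReal_re, ofReal_im, mul_zero,
    sub_zero]
  exact Real.tendsto_exp_atBot.comp ((tendsto_const_mul_atBot_of_pos ha).mpr tendsto_id)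

lemma cexp_integrableOn_Ioi {a : ℂ} (ha : a.re < 0) (c : ℝ) :
    IntegrableOn (fun s : ℝ => Complex.exp (a * s)) (Set.Ioi c) := by
  apply Integrable.mono' (g := fun s => Real.exp (-(-a.re) * s))
    (exp_neg_integrableOn_Ioi c (by linarith))
  · exact (Complex.continuous_exp.comp (by fun_prop)).aestronglyMeasurable.restrict
  · filter_upwards with s
    rw [Complex.norm_exp]
    simp [Complex.mul_re]

lemma cexp_integrableOn_Iic {a : ℂ} (ha : 0 < a.re) (c : ℝ) :
    IntegrableOn (fun s : ℝ => Complex.exp (a * s)) (Set.Iic c) := by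
  have h1 := ((cexp_integrableOn_Ioi (a := -a) (by simpa using ha)
    (-c)).integrable_indicator measurableSet_Ioi).comp_neg
  rw [integrableOn_Iic_iff_integrableOn_Iio]
  refine (integrable_indicator_iff measurableSet_Iio).mp ?_
  convert h1 using 1
  · rfl
  funext s
  by_cases hsc : s < c
  · have : -c < -s := by linarith
    simp only [Set.indicator_of_mem (by exact hsc : s ∈ Iio c),
      Set.indicator_of_mem (by exact this : -s ∈ Ioi (-c))]
    push_cast
    ring_nf
  · have : ¬ (-c < -s) := by linarith
    simp [Set.indicator_of_notMem, hsc, this]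

lemma cexp_integral_Ioi {a : ℂ} (ha : a.re < 0) (c : ℝ) :
    ∫ s in Set.Ioi c, Complex.exp (a * s) = -Complex.exp (a * c) / a := by
  have h0 : a ≠ 0 := fun h => by simp [h] at ha
  rw [integral_Ioi_of_hasDerivAt_of_tendsto' (fun x _ => cexpDeriv h0 x)
    (cexp_integrableOn_Ioi ha c) ((cexp_tendsto_atTop ha).div_const a)]
  ring

lemma cexp_integral_Iic {a : ℂ} (ha : 0 < a.re) (c : ℝ) :
    ∫ s in Set.Iic c, Complex.exp (a * s) = Complex.exp (a * c) / a := by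
  have h0 : a ≠ 0 := fun h => by simp [h] at ha
  rw [integral_Iic_of_hasDerivAt_of_tendsto' (fun x _ => cexpDeriv h0 x)
    (cexp_integrableOn_Iic ha c) ((cexp_tendsto_atBot ha).div_const a)]
  ring

end Aux

/-- The scalar Green's function `g_t(λ)`: for `t > 0` (and `t = 0`), `g_t(λ) = e^{λ t}` if
`Re λ < 0` and `g_t(λ) = 0` if `Re λ > 0`; for `t < 0`, `g_t(λ) = −e^{λ t}` if `Re λ > 0`
and `g_t(λ) = 0` if `Re λ < 0`. -/
noncomputable def greenG (t : ℝ) (lam : ℂ) : ℂ :=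
  if 0 ≤ t then (if lam.re < 0 then Complex.exp (lam * t) else 0)
  else (if 0 < lam.re then -Complex.exp (lam * t) else 0)

/-- The divided difference `exp_t⁻[λ, μ]` of the function `exp_t⁻`. -/
noncomputable def expMinusDD (t : ℝ) (lam mu : ℂ) : ℂ :=
  if lam.re < 0 then
    (if mu.re < 0 then 0 else -Complex.exp (mu * t) / (lam - mu))
  else
    (if mu.re < 0 then Complex.exp (lam * t) / (lam - mu)
      else (if lam = mu then (t : ℂ) * Complex.exp (lam * t)
        else (Complex.exp (lam * t) - Complex.exp (mu * t)) / (lam - mu)))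

/-- Key identity in the proof of **Theorem 15**, case `t < 0`: for `Re λ ≠ 0`, `Re μ ≠ 0`
and `t < 0`, the function `s ↦ g_s(λ) g_{t−s}(μ)` is integrable on `ℝ` and
`∫_{−∞}^{∞} g_s(λ) g_{t−s}(μ) ds = −exp_t⁻[λ, μ]`. -/
theorem integral_greenG_mul_greenG_neg (lam mu : ℂ) (hlam : lam.re ≠ 0) (hmu : mu.re ≠ 0)
    (t : ℝ) (ht : t < 0) :
    Integrable (fun s : ℝ => greenG s lam * greenG (t - s) mu) ∧
    ∫ s : ℝ, greenG s lam * greenG (t - s) mu = -expMinusDD t lam mu := by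
  rcases hlam.lt_or_gt with hl | hl <;> rcases hmu.lt_or_gt with hm | hm
  · -- lam.re < 0, mu.re < 0
    have hf : (fun s : ℝ => greenG s lam * greenG (t - s) mu) = fun _ => (0 : ℂ) := by
      funext s
      unfold greenG
      by_cases hs : 0 ≤ s
      · have h2 : ¬ (0 ≤ t - s) := by linarith
        simp [hs, h2, not_lt.2 hm.le]
      · simp [hs, not_lt.2 hl.le]
    rw [hf]
    refine ⟨integrable_zero _ _ _, ?_⟩
    simp [expMinusDD, hl, hm]
  · -- lam.re < 0, 0 < mu.re
    have hne : lam - mu ≠ 0 := by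
      intro h
      rw [sub_eq_zero] at h
      rw [h] at hl
      linarith
    set g : ℝ → ℂ := fun s => -Complex.exp (mu * t) * Complex.exp ((lam - mu) * s) with hg
    have hf : (fun s : ℝ => greenG s lam * greenG (t - s) mu) = Set.indicator (Set.Ici 0) g := by
      funext s
      by_cases hs : 0 ≤ s
      · rw [Set.indicator_of_mem (show s ∈ Set.Ici 0 from hs)]
        have h2 : ¬ (0 ≤ t - s) := by linarith
        simp only [greenG, if_pos hs, if_pos hl, if_neg h2, if_pos hm, hg]
        rw [mul_neg, neg_mul, ← Complex.exp_add, ← Complex.exp_add]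
        congr 1
        push_cast
        ring
      · rw [Set.indicator_of_notMem (show s ∉ Set.Ici 0 from hs)]
        simp [greenG, hs, not_lt.2 hl.le]
    have hre : (lam - mu).re < 0 := by
      rw [Complex.sub_re]; linarith
    have hint : IntegrableOn g (Set.Ici 0) := by
      rw [integrableOn_Ici_iff_integrableOn_Ioi]
      exact ((cexp_integrableOn_Ioi hre 0).const_mul _)
    constructor
    · rw [hf]; exact hint.integrable_indicator measurableSet_Ici
    · rw [hf, integral_indicator measurableSet_Ici,
        integral_Ici_eq_integral_Ioi]
      simp only [hg]
      rw [integral_const_mul, cexp_integral_Ioi hre 0]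
      simp only [expMinusDD, if_pos hl, if_neg (not_lt.2 hm.le)]
      field_simp
      simp
  · -- 0 < lam.re, mu.re < 0
    have hne : lam - mu ≠ 0 := by
      intro h
      rw [sub_eq_zero] at h
      rw [h] at hl
      linarith
    set g : ℝ → ℂ := fun s => -Complex.exp (mu * t) * Complex.exp ((lam - mu) * s) with hg
    have hf : (fun s : ℝ => greenG s lam * greenG (t - s) mu) = Set.indicator (Set.Iic t) g := by
      funext s
      by_cases hs : s ≤ t
      · rw [Set.indicator_of_mem (show s ∈ Set.Iic t from hs)]
        have h1 : ¬ (0 ≤ s) := by linarith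
        have h2 : 0 ≤ t - s := by linarith
        simp only [greenG, if_neg h1, if_pos hl, if_pos h2, if_pos hm, hg]
        rw [neg_mul, neg_mul, ← Complex.exp_add, ← Complex.exp_add]
        congr 1
        push_cast
        ring
      · rw [Set.indicator_of_notMem (show s ∉ Set.Iic t from hs)]
        have h2 : ¬ (0 ≤ t - s) := by linarith
        simp [greenG, h2, not_lt.2 hm.le]
    have hre : 0 < (lam - mu).re := by
      rw [Complex.sub_re]; linarith
    have hint : IntegrableOn g (Set.Iic t) := (cexp_integrableOn_Iic hre t).const_mul _
    constructor
    · rw [hf]; exact hint.integrable_indicator measurableSet_Iic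
    · rw [hf, integral_indicator measurableSet_Iic]
      simp only [hg]
      rw [integral_const_mul, cexp_integral_Iic hre t]
      simp only [expMinusDD, if_neg (not_lt.2 hl.le), if_pos hm]
      have hkey : Complex.exp (mu * t) * Complex.exp ((lam - mu) * t) = Complex.exp (lam * t) := by
        rw [← Complex.exp_add]; congr 1; push_cast; ring
      rw [show -Complex.exp (mu * t) * (Complex.exp ((lam - mu) * t) / (lam - mu)) =
        -(Complex.exp (mu * t) * Complex.exp ((lam - mu) * t)) / (lam - mu) by ring, hkey]
      ring
  · -- 0 < lam.re, 0 < mu.re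
    set g : ℝ → ℂ := fun s => Complex.exp (mu * t) * Complex.exp ((lam - mu) * s) with hg
    have hf : (fun s : ℝ => greenG s lam * greenG (t - s) mu) = Set.indicator (Set.Ioo t 0) g := by
      funext s
      by_cases hs1 : s < 0
      · by_cases hs2 : t < s
        · rw [Set.indicator_of_mem (show s ∈ Set.Ioo t 0 from ⟨hs2, hs1⟩)]
          have h1 : ¬ (0 ≤ s) := by linarith
          have h2 : ¬ (0 ≤ t - s) := by linarith
          simp only [greenG, if_neg h1, if_pos hl, if_neg h2, if_pos hm, hg]
          rw [neg_mul_neg, ← Complex.exp_add, ← Complex.exp_add]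
          congr 1
          push_cast
          ring
        · rw [Set.indicator_of_notMem (show s ∉ Set.Ioo t 0 from fun h => hs2 h.1)]
          have h2 : 0 ≤ t - s := by linarith
          simp [greenG, h2, not_lt.2 hm.le]
      · rw [Set.indicator_of_notMem (show s ∉ Set.Ioo t 0 from fun h => hs1 h.2)]
        have h1 : 0 ≤ s := by linarith
        simp [greenG, h1, not_lt.2 hl.le]
    have hint : IntegrableOn g (Set.Ioo t 0) := by
      have hc : Continuous g := by
        rw [hg]; fun_prop
      exact hc.integrableOn_Icc.mono_set Set.Ioo_subset_Icc_self
    constructor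
    · rw [hf]; exact hint.integrable_indicator measurableSet_Ioo
    · rw [hf, integral_indicator measurableSet_Ioo,
        ← integral_Ioc_eq_integral_Ioo,
        ← intervalIntegral.integral_of_le ht.le]
      by_cases hlm : lam = mu
      · subst hlm
        simp only [hg, sub_self, zero_mul, Complex.exp_zero, mul_one]
        rw [intervalIntegral.integral_const]
        have hdd : expMinusDD t lam lam = (t : ℂ) * Complex.exp (lam * t) := by
          simp [expMinusDD, not_lt.2 hl.le]
        rw [hdd, zero_sub, neg_smul, Complex.real_smul]
      · have hne : lam - mu ≠ 0 := sub_ne_zero.mpr hlm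
        simp only [hg]
        rw [intervalIntegral.integral_const_mul, integral_exp_mul_complex hne]
        simp only [expMinusDD, if_neg (not_lt.2 hl.le), if_neg (not_lt.2 hm.le), if_neg hlm,
          Complex.ofReal_zero, mul_zero, Complex.exp_zero]
        have hkey : Complex.exp (mu * t) * Complex.exp ((lam - mu) * t) = Complex.exp (lam * t) := by
          rw [← Complex.exp_add]; congr 1; push_cast; ring
        rw [show Complex.exp (mu * t) * ((1 - Complex.exp ((lam - mu) * t)) / (lam - mu))
            = (Complex.exp (mu * t) - Complex.exp (mu * t) * Complex.exp ((lam - mu) * t))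
              / (lam - mu) by ring, hkey]
        ring
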